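/- arXiv:0901.1315 — 2 statements merged into one kernel-verified Lean document; each statement's English description precedes it below -/
import Mathlib

section
/- Fix μ ∈ ℝ, σ > 0, y₀ ∈ ℝ and y ∈ ℝ, and for a < b define q(y, a, b | y₀) = (1/(√(2π) σ)) exp(−(μ² − 2μ(y − y₀))/(2σ²)) Σ_{n∈ℤ} (exp(−d₁(n)) − exp(−d₂(n))), where d₁(n) = (y − y₀ − 2n(b − a))²/(2σ²) and d₂(n) = (y + y₀ − 2a − 2n(b − a))²/(2σ²). Then for all a < min(y, y₀) and b > max(y, y₀), the mixed second partial derivative of q in (a, b) exists and satisfies −∂²q/(∂a ∂b) (y, a, b | y₀) = (1/(√(2π) σ³)) exp(−(μ² − 2μ(y − y₀))/(2σ²)) Σ_{n∈ℤ} [ 4n² (2 d₁(n) − 1) exp(−d₁(n)) − 4n(n−1) (2 d₂(n) − 1) exp(−d₂(n)) ]. -/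
open MeasureTheory Filter Set

/-- For `n : ℤ`, the exponent `d₁(n) = (y − y₀ − 2n(b − a))²/(2σ²)`. -/
noncomputable def d1 (σ y₀ y a b : ℝ) (n : ℤ) : ℝ :=
  (y - y₀ - 2 * (n : ℝ) * (b - a)) ^ 2 / (2 * σ ^ 2)

/-- For `n : ℤ`, the exponent `d₂(n) = (y + y₀ − 2a − 2n(b − a))²/(2σ²)`. -/
noncomputable def d2 (σ y₀ y a b : ℝ) (n : ℤ) : ℝ :=
  (y + y₀ - 2 * a - 2 * (n : ℝ) * (b - a)) ^ 2 / (2 * σ ^ 2)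

/-- The function `q(y, a, b | y₀)` (joint cdf integrand). -/
noncomputable def qCHLO (μ σ y₀ a b y : ℝ) : ℝ :=
  (1 / (Real.sqrt (2 * Real.pi) * σ)) *
    Real.exp (-(μ ^ 2 - 2 * μ * (y - y₀)) / (2 * σ ^ 2)) *
    ∑' n : ℤ, (Real.exp (-(d1 σ y₀ y a b n)) - Real.exp (-(d2 σ y₀ y a b n)))

/-- The claimed value of `−∂²q/(∂a ∂b)`. -/
noncomputable def pCHLO (μ σ y₀ a b y : ℝ) : ℝ :=
  (1 / (Real.sqrt (2 * Real.pi) * σ ^ 3)) *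
    Real.exp (-(μ ^ 2 - 2 * μ * (y - y₀)) / (2 * σ ^ 2)) *
    ∑' n : ℤ,
      (4 * (n : ℝ) ^ 2 * (2 * d1 σ y₀ y a b n - 1) * Real.exp (-(d1 σ y₀ y a b n))
        - 4 * (n : ℝ) * ((n : ℝ) - 1) * (2 * d2 σ y₀ y a b n - 1) *
            Real.exp (-(d2 σ y₀ y a b n)))

/- ## Auxiliary definitions and lemmas -/

noncomputable def gterm (σ y₀ y a b : ℝ) (n : ℤ) : ℝ :=
  (2*(n:ℝ)/σ^2) * ((y - y₀ - 2*(n:ℝ)*(b-a)) * Real.exp (-(d1 σ y₀ y a b n))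
    - (y + y₀ - 2*a - 2*(n:ℝ)*(b-a)) * Real.exp (-(d2 σ y₀ y a b n)))

noncomputable def hterm (σ y₀ y b : ℝ) (n : ℤ) (t : ℝ) : ℝ :=
  (σ^2)⁻¹ * -(4 * (n : ℝ) ^ 2 * (2 * d1 σ y₀ y t b n - 1) * Real.exp (-(d1 σ y₀ y t b n))
        - 4 * (n : ℝ) * ((n : ℝ) - 1) * (2 * d2 σ y₀ y t b n - 1) *
            Real.exp (-(d2 σ y₀ y t b n)))


lemma core1 (s : ℝ) : |s| * Real.exp (-s^2) ≤ 1 := by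
  have h1 : |s| ≤ Real.exp (s^2) := by
    nlinarith [Real.add_one_le_exp (s^2), abs_nonneg s, sq_abs s, sq_nonneg (|s| - 1)]
  have h2 : (0:ℝ) < Real.exp (s^2) := Real.exp_pos _
  rw [Real.exp_neg]
  calc |s| * (Real.exp (s^2))⁻¹ ≤ Real.exp (s^2) * (Real.exp (s^2))⁻¹ := by
        apply mul_le_mul_of_nonneg_right h1 (by positivity)
    _ = 1 := by field_simp

lemma core2 (s : ℝ) : s^2 * Real.exp (-s^2) ≤ 1 := by
  have h1 : s^2 ≤ Real.exp (s^2) := by nlinarith [Real.add_one_le_exp (s^2)]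
  have h2 : (0:ℝ) < Real.exp (s^2) := Real.exp_pos _
  rw [Real.exp_neg]
  calc s^2 * (Real.exp (s^2))⁻¹ ≤ Real.exp (s^2) * (Real.exp (s^2))⁻¹ := by
        apply mul_le_mul_of_nonneg_right h1 (by positivity)
    _ = 1 := by field_simp

lemma split_exp {σ : ℝ} (hσ : 0 < σ) (v : ℝ) :
    Real.exp (-(v^2/(2*σ^2))) = Real.exp (-(v^2/(4*σ^2))) * Real.exp (-(v^2/(4*σ^2))) := by
  rw [← Real.exp_add]
  congr 1
  field_simp
  ring

lemma L1 {σ : ℝ} (hσ : 0 < σ) (v : ℝ) :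
    |v| * Real.exp (-(v^2/(2*σ^2))) ≤ 2*σ * Real.exp (-(v^2/(4*σ^2))) := by
  have hs : (v/(2*σ))^2 = v^2/(4*σ^2) := by rw [div_pow]; congr 1; ring
  have h := core1 (v/(2*σ))
  rw [hs] at h
  have habs : |v/(2*σ)| = |v|/(2*σ) := by
    rw [abs_div, abs_of_pos (by positivity : (0:ℝ) < 2*σ)]
  rw [habs] at h
  have h' : |v| * Real.exp (-(v^2/(4*σ^2))) ≤ 2*σ := by
    have := mul_le_mul_of_nonneg_left h (by positivity : (0:ℝ) ≤ 2*σ)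
    rw [mul_one] at this
    calc |v| * Real.exp (-(v^2/(4*σ^2))) = 2*σ * (|v|/(2*σ) * Real.exp (-(v^2/(4*σ^2)))) := by
          field_simp
      _ ≤ 2*σ := this
  rw [split_exp hσ v, ← mul_assoc]
  exact mul_le_mul_of_nonneg_right h' (Real.exp_nonneg _)

lemma L2 {σ : ℝ} (hσ : 0 < σ) (v : ℝ) :
    |1 - v^2/σ^2| * Real.exp (-(v^2/(2*σ^2))) ≤ 5 * Real.exp (-(v^2/(4*σ^2))) := by
  have hx : (0:ℝ) ≤ v^2/σ^2 := by positivity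
  have habs : |1 - v^2/σ^2| ≤ 1 + v^2/σ^2 := by
    rcases abs_cases (1 - v^2/σ^2) with ⟨h, _⟩ | ⟨h, _⟩ <;> rw [h] <;> linarith
  have hs : (v/(2*σ))^2 = v^2/(4*σ^2) := by rw [div_pow]; congr 1; ring
  have hc := core2 (v/(2*σ))
  rw [hs] at hc
  have hsq : (v/(2*σ))^2 = v^2/(4*σ^2) := hs
  have hvs : v^2/σ^2 = 4 * (v^2/(4*σ^2)) := by field_simp
  have key : (1 + v^2/σ^2) * Real.exp (-(v^2/(4*σ^2))) ≤ 5 := by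
    have h2 : v^2/(4*σ^2) * Real.exp (-(v^2/(4*σ^2))) ≤ 1 := by
      have := core2 (v/(2*σ)); rwa [hs] at this
    have he1 : Real.exp (-(v^2/(4*σ^2))) ≤ 1 := by
      apply Real.exp_le_one_iff.mpr
      simp only [neg_nonpos]
      positivity
    rw [hvs]
    nlinarith [Real.exp_nonneg (-(v^2/(4*σ^2)))]
  calc |1 - v^2/σ^2| * Real.exp (-(v^2/(2*σ^2)))
      = |1 - v^2/σ^2| * Real.exp (-(v^2/(4*σ^2))) * Real.exp (-(v^2/(4*σ^2))) := by
        rw [split_exp hσ v]; ring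
    _ ≤ 5 * Real.exp (-(v^2/(4*σ^2))) := by
        apply mul_le_mul_of_nonneg_right _ (Real.exp_nonneg _)
        calc |1 - v^2/σ^2| * Real.exp (-(v^2/(4*σ^2)))
            ≤ (1 + v^2/σ^2) * Real.exp (-(v^2/(4*σ^2))) :=
              mul_le_mul_of_nonneg_right habs (Real.exp_nonneg _)
          _ ≤ 5 := key


lemma summable_aux (c : ℝ) (hc : 0 < c) (k : ℕ) :
    Summable (fun n : ℤ => (|(n:ℝ)| + 1)^k * Real.exp (-(c * (|(n:ℝ)| - 1)^2))) := by
  have key : Summable (fun n : ℕ => ((n:ℝ) + 1)^k * Real.exp (-(c * ((n:ℝ) - 1)^2))) := by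
    set K : ℝ := (k + 1)/(2*c) with hK
    set M : ℝ := Real.exp (2*k + 1 + c*K^2) with hM
    have hgeo : Summable (fun n : ℕ => M * (Real.exp (-1))^n) :=
      (summable_geometric_of_lt_one (Real.exp_nonneg _)
        (by rw [Real.exp_lt_one_iff]; norm_num)).mul_left M
    apply Summable.of_nonneg_of_le (fun n => by positivity) (fun n => ?_) hgeo
    have h1 : ((n:ℝ) + 1)^k ≤ Real.exp (k * ((n:ℝ)+1)) := by
      calc ((n:ℝ) + 1)^k ≤ (Real.exp ((n:ℝ)+1))^k := by
            apply pow_le_pow_left₀ (by positivity)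
            linarith [Real.add_one_le_exp ((n:ℝ)), Real.exp_le_exp.mpr
              (by linarith : ((n:ℝ)) ≤ (n:ℝ)+1)]
        _ = Real.exp (k * ((n:ℝ)+1)) := (Real.exp_nat_mul _ _).symm
    have h2cK : 2*c*K = k + 1 := by rw [hK]; field_simp
    have h2 : (k:ℝ) * ((n:ℝ)+1) + -(c * ((n:ℝ) - 1)^2) ≤ 2*k + 1 + c*K^2 + (-1) * n := by
      nlinarith [sq_nonneg ((n:ℝ) - 1 - K), hc.le]
    calc ((n:ℝ) + 1)^k * Real.exp (-(c * ((n:ℝ) - 1)^2))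
        ≤ Real.exp (k * ((n:ℝ)+1)) * Real.exp (-(c * ((n:ℝ) - 1)^2)) :=
          mul_le_mul_of_nonneg_right h1 (Real.exp_nonneg _)
      _ = Real.exp ((k:ℝ) * ((n:ℝ)+1) + -(c * ((n:ℝ) - 1)^2)) := (Real.exp_add _ _).symm
      _ ≤ Real.exp (2*k + 1 + c*K^2 + (-1) * n) := Real.exp_le_exp.mpr h2
      _ = M * (Real.exp (-1))^n := by
          rw [Real.exp_add, hM, ← Real.exp_nat_mul]
          congr 2
          ring
  apply Summable.of_nat_of_neg
  · simpa using key
  · simpa using key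

lemma hasDerivAt_tsum_on {f f' : ℤ → ℝ → ℝ} {s : Set ℝ} (hs : IsOpen s)
    {u : ℤ → ℝ} (hu : Summable u)
    (hf : ∀ n, ∀ x ∈ s, HasDerivAt (f n) (f' n x) x)
    (hf' : ∀ n, ∀ x ∈ s, ‖f' n x‖ ≤ u n)
    (hsum : ∀ x ∈ s, Summable (fun n => f n x))
    {x : ℝ} (hx : x ∈ s) :
    HasDerivAt (fun y => ∑' n, f n y) (∑' n, f' n x) x := by
  have A : TendstoUniformlyOn (fun (t : Finset ℤ) y => ∑ n ∈ t, f' n y)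
      (fun y => ∑' n, f' n y) atTop s :=
    tendstoUniformlyOn_tsum hu (fun n y hy => hf' n y hy)
  exact hasDerivAt_of_tendstoUniformlyOn hs A
    (Eventually.of_forall fun t y hy => HasDerivAt.sum fun n _ => hf n y hy)
    (fun y hy => by simp only [Finset.sum_apply]; exact (hsum y hy).hasSum) hx


lemma bound_X {y₀ y a' b' : ℝ} (ha' : a' < min y y₀) (hb' : max y y₀ < b') (n : ℤ) :
    2*(|(n:ℝ)| - 1) * (b' - a') ≤ |y - y₀ - 2*(n:ℝ)*(b' - a')| := by
  have hy : a' < y := lt_of_lt_of_le ha' (min_le_left y y₀)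
  have hy0 : a' < y₀ := lt_of_lt_of_le ha' (min_le_right y y₀)
  have hyb : y < b' := lt_of_le_of_lt (le_max_left y y₀) hb'
  have hy0b : y₀ < b' := lt_of_le_of_lt (le_max_right y y₀) hb'
  have hT : 0 < b' - a' := by linarith
  have h1 : |2*(n:ℝ)*(b' - a')| - |y - y₀| ≤ |y - y₀ - 2*(n:ℝ)*(b' - a')| := by
    have := abs_sub_abs_le_abs_sub (2*(n:ℝ)*(b' - a')) (y - y₀)
    calc |2*(n:ℝ)*(b' - a')| - |y - y₀| ≤ |2*(n:ℝ)*(b' - a') - (y - y₀)| := this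
      _ = |y - y₀ - 2*(n:ℝ)*(b' - a')| := abs_sub_comm _ _
  have h2 : |y - y₀| ≤ b' - a' :=
    abs_sub_le_iff.mpr ⟨by linarith, by linarith⟩
  have h5 : |2*(n:ℝ)*(b' - a')| = 2 * |(n:ℝ)| * (b' - a') := by
    rw [abs_mul, abs_mul, abs_two, abs_of_pos hT]
  rw [h5] at h1
  nlinarith [abs_nonneg (n:ℝ)]

lemma bound_Z {y₀ y a' b' : ℝ} (ha' : a' < min y y₀) (hb' : max y y₀ < b') (n : ℤ) :
    2*(|(n:ℝ)| - 1) * (b' - a') ≤ |y + y₀ - 2*a' - 2*(n:ℝ)*(b' - a')| := by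
  have hy : a' < y := lt_of_lt_of_le ha' (min_le_left y y₀)
  have hy0 : a' < y₀ := lt_of_lt_of_le ha' (min_le_right y y₀)
  have hyb : y < b' := lt_of_le_of_lt (le_max_left y y₀) hb'
  have hy0b : y₀ < b' := lt_of_le_of_lt (le_max_right y y₀) hb'
  rcases le_or_gt n 0 with hn | hn
  · have habs : |(n:ℝ)| = -(n:ℝ) := by
      rw [abs_of_nonpos]; exact_mod_cast Int.cast_nonpos.mpr hn
    rw [habs]
    have := le_abs_self (y + y₀ - 2*a' - 2*(n:ℝ)*(b' - a'))
    nlinarith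
  · have hn1 : (1:ℝ) ≤ (n:ℝ) := by exact_mod_cast hn
    have habs : |(n:ℝ)| = (n:ℝ) := abs_of_pos (by linarith)
    rw [habs]
    have := neg_abs_le (y + y₀ - 2*a' - 2*(n:ℝ)*(b' - a'))
    nlinarith

-- stage 1 per-term derivative (in b)
lemma term1_deriv (σ y₀ y a' : ℝ) (n : ℤ) (b' : ℝ) :
    HasDerivAt (fun t => Real.exp (-(d1 σ y₀ y a' t n)) - Real.exp (-(d2 σ y₀ y a' t n)))
      (gterm σ y₀ y a' b' n) b' := by
  have hin : HasDerivAt (fun t : ℝ => y - y₀ - 2 * (n:ℝ) * (t - a')) (-(2*(n:ℝ))) b' := by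
    simpa using ((hasDerivAt_id b').sub_const a').const_mul (2*(n:ℝ)) |>.const_sub (y - y₀)
  have hin2 : HasDerivAt (fun t : ℝ => y + y₀ - 2*a' - 2 * (n:ℝ) * (t - a')) (-(2*(n:ℝ))) b' := by
    simpa using ((hasDerivAt_id b').sub_const a').const_mul (2*(n:ℝ)) |>.const_sub (y + y₀ - 2*a')
  have h1 := (((hin.pow 2).div_const (2*σ^2)).neg).exp
  have h2 := (((hin2.pow 2).div_const (2*σ^2)).neg).exp
  have h := h1.sub h2
  simp only [d1, d2, gterm]
  convert h using 1 <;> first | rfl | skip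
  simp only [Pi.neg_apply, Pi.pow_apply, Nat.cast_ofNat]; ring

-- stage 2 per-term derivative (in a)
lemma term2_deriv (σ y₀ y b : ℝ) (n : ℤ) (t0 : ℝ) :
    HasDerivAt (fun t => gterm σ y₀ y t b n) (hterm σ y₀ y b n t0) t0 := by
  have hX : HasDerivAt (fun t : ℝ => y - y₀ - 2 * (n:ℝ) * (b - t)) (-(2*(n:ℝ)*(-1))) t0 := by
    simpa using ((hasDerivAt_id t0).const_sub b).const_mul (2*(n:ℝ)) |>.const_sub (y - y₀)
  have hZ : HasDerivAt (fun t : ℝ => y + y₀ - 2*t - 2 * (n:ℝ) * (b - t))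
      (-2 - 2*(n:ℝ)*(-1)) t0 := by
    have hZa : HasDerivAt (fun t : ℝ => y + y₀ - 2*t) (-2 : ℝ) t0 := by
      simpa using ((hasDerivAt_id t0).const_mul 2).const_sub (y + y₀)
    have hZb : HasDerivAt (fun t : ℝ => 2 * (n:ℝ) * (b - t)) (2*(n:ℝ)*(-1)) t0 := by
      simpa using ((hasDerivAt_id t0).const_sub b).const_mul (2*(n:ℝ))
    exact hZa.sub hZb
  have hEX := (((hX.pow 2).div_const (2*σ^2)).neg).exp
  have hEZ := (((hZ.pow 2).div_const (2*σ^2)).neg).exp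
  have h := ((hX.mul hEX).sub (hZ.mul hEZ)).const_mul (2*(n:ℝ)/σ^2)
  simp only [gterm, hterm, d1, d2]
  convert h using 1 <;> first | rfl | skip
  simp only [Pi.neg_apply, Pi.pow_apply, Nat.cast_ofNat]; ring

lemma exp_le_of_bound {σ δ T v r : ℝ} (hσ : 0 < σ) (hδ0 : 0 < δ) (hδ : δ ≤ T)
    (hr : 0 ≤ r) (hv : 2*r*T ≤ |v|) :
    Real.exp (-(v^2/(4*σ^2))) ≤ Real.exp (-(δ^2/σ^2 * r^2)) := by
  apply Real.exp_le_exp.mpr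
  apply neg_le_neg
  have h1 : 2*r*δ ≤ |v| := le_trans (by nlinarith) hv
  have h0 : 0 ≤ 2*r*δ := by positivity
  have h2 : (2*r*δ)^2 ≤ v^2 := by
    nlinarith [mul_self_le_mul_self h0 h1, abs_mul_abs_self v]
  have h3 : δ^2/σ^2 * r^2 = (2*r*δ)^2/(4*σ^2) := by field_simp; ring
  rw [h3]
  gcongr

lemma abs_sub_le' (a b : ℝ) : |a - b| ≤ |a| + |b| := by
  rw [sub_eq_add_neg]
  exact (abs_add_le _ _).trans (by rw [abs_neg])

lemma gterm_bound {σ y₀ y a' b' δ : ℝ} (hσ : 0 < σ) (ha' : a' < min y y₀)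
    (hb' : max y y₀ < b') (hδ0 : 0 < δ) (hδ : δ ≤ b' - a') (n : ℤ) :
    |gterm σ y₀ y a' b' n| ≤
      8/σ * ((|(n:ℝ)| + 1)^1 * Real.exp (-(δ^2/σ^2 * (|(n:ℝ)| - 1)^2))) := by
  by_cases hn : n = 0
  · subst hn
    simp [gterm]
    positivity
  · have hn1 : (1:ℝ) ≤ |(n:ℝ)| := by
      have := Int.one_le_abs hn
      exact_mod_cast this
    have hr : (0:ℝ) ≤ |(n:ℝ)| - 1 := by linarith
    set E := Real.exp (-(δ^2/σ^2 * (|(n:ℝ)| - 1)^2)) with hE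
    have hEpos : (0:ℝ) < E := Real.exp_pos _
    set X := y - y₀ - 2*(n:ℝ)*(b' - a') with hX
    set Z := y + y₀ - 2*a' - 2*(n:ℝ)*(b' - a') with hZ
    have hX1 : |X| * Real.exp (-(d1 σ y₀ y a' b' n)) ≤ 2*σ*E := by
      calc |X| * Real.exp (-(d1 σ y₀ y a' b' n))
          ≤ 2*σ * Real.exp (-(X^2/(4*σ^2))) := by
            have := L1 hσ X
            simpa [d1, hX] using this
        _ ≤ 2*σ*E := by
            apply mul_le_mul_of_nonneg_left _ (by positivity)
            exact exp_le_of_bound hσ hδ0 hδ hr (bound_X ha' hb' n)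
    have hZ1 : |Z| * Real.exp (-(d2 σ y₀ y a' b' n)) ≤ 2*σ*E := by
      calc |Z| * Real.exp (-(d2 σ y₀ y a' b' n))
          ≤ 2*σ * Real.exp (-(Z^2/(4*σ^2))) := by
            have := L1 hσ Z
            simpa [d2, hZ] using this
        _ ≤ 2*σ*E := by
            apply mul_le_mul_of_nonneg_left _ (by positivity)
            exact exp_le_of_bound hσ hδ0 hδ hr (bound_Z ha' hb' n)
    have e1 := Real.exp_nonneg (-(d1 σ y₀ y a' b' n))
    have e2 := Real.exp_nonneg (-(d2 σ y₀ y a' b' n))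
    calc |gterm σ y₀ y a' b' n|
        = |2*(n:ℝ)/σ^2| * |X * Real.exp (-(d1 σ y₀ y a' b' n))
            - Z * Real.exp (-(d2 σ y₀ y a' b' n))| := by
          rw [gterm, abs_mul]
      _ ≤ (2*|(n:ℝ)|/σ^2) * (|X| * Real.exp (-(d1 σ y₀ y a' b' n))
            + |Z| * Real.exp (-(d2 σ y₀ y a' b' n))) := by
          apply mul_le_mul
          · rw [abs_div, abs_mul, abs_two, abs_of_pos (by positivity : (0:ℝ) < σ^2)]
          · refine (abs_sub_le' _ _).trans ?_
            rw [abs_mul, abs_mul, abs_of_nonneg e1, abs_of_nonneg e2]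
          · positivity
          · positivity
      _ ≤ (2*|(n:ℝ)|/σ^2) * (2*σ*E + 2*σ*E) := by
          apply mul_le_mul_of_nonneg_left (add_le_add hX1 hZ1) (by positivity)
      _ ≤ 8/σ * ((|(n:ℝ)| + 1)^1 * E) := by
          rw [pow_one]
          have hσ2 : (0:ℝ) < σ^2 := by positivity
          rw [div_mul_eq_mul_div, div_mul_eq_mul_div, div_le_div_iff₀ hσ2 (by positivity : (0:ℝ) < σ)]
          nlinarith [hEpos.le, abs_nonneg (n:ℝ), hσ.le]

lemma hterm_bound {σ y₀ y b t δ : ℝ} (hσ : 0 < σ) (ht : t < min y y₀)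
    (hb' : max y y₀ < b) (hδ0 : 0 < δ) (hδ : δ ≤ b - t) (n : ℤ) :
    |hterm σ y₀ y b n t| ≤
      40/σ^2 * ((|(n:ℝ)| + 1)^2 * Real.exp (-(δ^2/σ^2 * (|(n:ℝ)| - 1)^2))) := by
  by_cases hn : n = 0
  · subst hn
    simp [hterm]
    positivity
  · have hn1 : (1:ℝ) ≤ |(n:ℝ)| := by
      have := Int.one_le_abs hn
      exact_mod_cast this
    have hr : (0:ℝ) ≤ |(n:ℝ)| - 1 := by linarith
    set E := Real.exp (-(δ^2/σ^2 * (|(n:ℝ)| - 1)^2)) with hE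
    have hEpos : (0:ℝ) < E := Real.exp_pos _
    set X := y - y₀ - 2*(n:ℝ)*(b - t) with hX
    set Z := y + y₀ - 2*t - 2*(n:ℝ)*(b - t) with hZ
    have hd1 : d1 σ y₀ y t b n = X^2/(2*σ^2) := by rw [d1]
    have hd2 : d2 σ y₀ y t b n = Z^2/(2*σ^2) := by rw [d2]
    have h2d1 : 2 * d1 σ y₀ y t b n - 1 = -(1 - X^2/σ^2) := by
      rw [hd1]; field_simp; ring
    have h2d2 : 2 * d2 σ y₀ y t b n - 1 = -(1 - Z^2/σ^2) := by
      rw [hd2]; field_simp; ring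
    have hX1 : |2 * d1 σ y₀ y t b n - 1| * Real.exp (-(d1 σ y₀ y t b n)) ≤ 5*E := by
      calc |2 * d1 σ y₀ y t b n - 1| * Real.exp (-(d1 σ y₀ y t b n))
          ≤ 5 * Real.exp (-(X^2/(4*σ^2))) := by
            rw [h2d1, abs_neg, hd1]
            exact L2 hσ X
        _ ≤ 5*E := by
            apply mul_le_mul_of_nonneg_left _ (by norm_num)
            exact exp_le_of_bound hσ hδ0 hδ hr (bound_X ht hb' n)
    have hZ1 : |2 * d2 σ y₀ y t b n - 1| * Real.exp (-(d2 σ y₀ y t b n)) ≤ 5*E := by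
      calc |2 * d2 σ y₀ y t b n - 1| * Real.exp (-(d2 σ y₀ y t b n))
          ≤ 5 * Real.exp (-(Z^2/(4*σ^2))) := by
            rw [h2d2, abs_neg, hd2]
            exact L2 hσ Z
        _ ≤ 5*E := by
            apply mul_le_mul_of_nonneg_left _ (by norm_num)
            exact exp_le_of_bound hσ hδ0 hδ hr (bound_Z ht hb' n)
    have e1 := Real.exp_nonneg (-(d1 σ y₀ y t b n))
    have e2 := Real.exp_nonneg (-(d2 σ y₀ y t b n))
    have hσ2 : (0:ℝ) < σ^2 := by positivity
    have t1 : |4 * (n:ℝ)^2 * (2 * d1 σ y₀ y t b n - 1) * Real.exp (-(d1 σ y₀ y t b n))|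
        ≤ 4*(n:ℝ)^2 * (5*E) := by
      rw [abs_mul, abs_mul, abs_of_nonneg e1,
        abs_of_nonneg (by positivity : (0:ℝ) ≤ 4*(n:ℝ)^2), mul_assoc]
      exact mul_le_mul_of_nonneg_left hX1 (by positivity)
    have t2 : |4 * (n:ℝ) * ((n:ℝ) - 1) * (2 * d2 σ y₀ y t b n - 1) *
        Real.exp (-(d2 σ y₀ y t b n))| ≤ 4*|(n:ℝ)| * (|(n:ℝ)| + 1) * (5*E) := by
      rw [abs_mul, abs_mul, abs_of_nonneg e2, mul_assoc]
      apply mul_le_mul _ hZ1 (by positivity) (by positivity)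
      calc |4 * (n:ℝ) * ((n:ℝ) - 1)| = 4 * |(n:ℝ)| * |(n:ℝ) - 1| := by
            rw [abs_mul, abs_mul]; norm_num
        _ ≤ 4 * |(n:ℝ)| * (|(n:ℝ)| + 1) := by
            apply mul_le_mul_of_nonneg_left _ (by positivity)
            simpa using abs_sub_le' (n:ℝ) 1
    have tri : |hterm σ y₀ y b n t| ≤
        (σ^2)⁻¹ * (4*(n:ℝ)^2 * (5*E) + 4*|(n:ℝ)| * (|(n:ℝ)| + 1) * (5*E)) := by
      rw [hterm, abs_mul, abs_neg, abs_of_pos (by positivity : (0:ℝ) < (σ^2)⁻¹)]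
      exact mul_le_mul_of_nonneg_left
        ((abs_sub_le' _ _).trans (add_le_add t1 t2)) (by positivity)
    refine tri.trans ?_
    have heq : 40/σ^2 * ((|(n:ℝ)| + 1)^2 * E) = (σ^2)⁻¹ * (40 * ((|(n:ℝ)| + 1)^2 * E)) := by
      rw [div_eq_mul_inv]; ring
    rw [heq]
    apply mul_le_mul_of_nonneg_left _ (by positivity)
    nlinarith [hEpos.le, abs_nonneg (n:ℝ), sq_abs (n:ℝ)]

lemma fterm_bound {σ y₀ y a' b' δ : ℝ} (hσ : 0 < σ) (ha' : a' < min y y₀)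
    (hb' : max y y₀ < b') (hδ0 : 0 < δ) (hδ : δ ≤ b' - a') (n : ℤ) :
    |Real.exp (-(d1 σ y₀ y a' b' n)) - Real.exp (-(d2 σ y₀ y a' b' n))| ≤
      (2*Real.exp (δ^2/σ^2)) *
        ((|(n:ℝ)| + 1)^0 * Real.exp (-(δ^2/σ^2 * (|(n:ℝ)| - 1)^2))) := by
  have hd1nn : 0 ≤ d1 σ y₀ y a' b' n := by rw [d1]; positivity
  have hd2nn : 0 ≤ d2 σ y₀ y a' b' n := by rw [d2]; positivity
  have e1 : Real.exp (-(d1 σ y₀ y a' b' n)) ≤ 1 := Real.exp_le_one_iff.mpr (by linarith)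
  have e2 : Real.exp (-(d2 σ y₀ y a' b' n)) ≤ 1 := Real.exp_le_one_iff.mpr (by linarith)
  have tri := abs_sub_le' (Real.exp (-(d1 σ y₀ y a' b' n))) (Real.exp (-(d2 σ y₀ y a' b' n)))
  rw [abs_of_nonneg (Real.exp_nonneg _), abs_of_nonneg (Real.exp_nonneg _)] at tri
  rw [pow_zero, one_mul]
  by_cases hn : n = 0
  · subst hn
    have : (2*Real.exp (δ^2/σ^2)) * Real.exp (-(δ^2/σ^2 * (|((0:ℤ):ℝ)| - 1)^2)) = 2 := by
      simp only [Int.cast_zero, abs_zero]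
      rw [mul_assoc, ← Real.exp_add]
      norm_num
    rw [this]
    linarith
  · have hn1 : (1:ℝ) ≤ |(n:ℝ)| := by
      have := Int.one_le_abs hn
      exact_mod_cast this
    have hr : (0:ℝ) ≤ |(n:ℝ)| - 1 := by linarith
    set E := Real.exp (-(δ^2/σ^2 * (|(n:ℝ)| - 1)^2)) with hE
    have hEpos : (0:ℝ) < E := Real.exp_pos _
    have hone : (1:ℝ) ≤ Real.exp (δ^2/σ^2) := Real.one_le_exp (by positivity)
    have hb1 : Real.exp (-(d1 σ y₀ y a' b' n)) ≤ E := by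
      calc Real.exp (-(d1 σ y₀ y a' b' n))
          ≤ Real.exp (-((y - y₀ - 2*(n:ℝ)*(b' - a'))^2/(4*σ^2))) := by
            apply Real.exp_le_exp.mpr
            apply neg_le_neg
            rw [d1]
            apply div_le_div_of_nonneg_left (by positivity) (by positivity)
            nlinarith
        _ ≤ E := exp_le_of_bound hσ hδ0 hδ hr (bound_X ha' hb' n)
    have hb2 : Real.exp (-(d2 σ y₀ y a' b' n)) ≤ E := by
      calc Real.exp (-(d2 σ y₀ y a' b' n))
          ≤ Real.exp (-((y + y₀ - 2*a' - 2*(n:ℝ)*(b' - a'))^2/(4*σ^2))) := by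
            apply Real.exp_le_exp.mpr
            apply neg_le_neg
            rw [d2]
            apply div_le_div_of_nonneg_left (by positivity) (by positivity)
            nlinarith
        _ ≤ E := exp_le_of_bound hσ hδ0 hδ hr (bound_Z ha' hb' n)
    nlinarith

lemma stage1 (σ y₀ y a' : ℝ) (hσ : 0 < σ) (ha' : a' < min y y₀) {b' : ℝ}
    (hb' : max y y₀ < b') :
    HasDerivAt
      (fun t => ∑' n : ℤ, (Real.exp (-(d1 σ y₀ y a' t n)) - Real.exp (-(d2 σ y₀ y a' t n))))
      (∑' n : ℤ, gterm σ y₀ y a' b' n) b' := by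
  set δ := max y y₀ - a' with hδdef
  have hδ0 : 0 < δ := by
    have h1 := lt_of_lt_of_le ha' (min_le_left y y₀)
    have h2 := le_max_left y y₀
    simp only [hδdef]
    linarith
  have hc : (0:ℝ) < δ^2/σ^2 := by positivity
  exact hasDerivAt_tsum_on (isOpen_Ioi (a := max y y₀))
    (u := fun n : ℤ => 8/σ * ((|(n:ℝ)| + 1)^1 * Real.exp (-(δ^2/σ^2 * (|(n:ℝ)| - 1)^2))))
    ((summable_aux (δ^2/σ^2) hc 1).mul_left _)
    (fun n x _ => term1_deriv σ y₀ y a' n x)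
    (fun n x hx => by
      rw [Real.norm_eq_abs]
      exact gterm_bound hσ ha' hx hδ0 (by simp only [hδdef]; simp only [mem_Ioi] at hx; linarith) n)
    (fun x hx => by
      apply Summable.of_norm_bounded
        (((summable_aux (δ^2/σ^2) hc 0).mul_left (2*Real.exp (δ^2/σ^2))))
      intro n
      rw [Real.norm_eq_abs]
      exact fterm_bound hσ ha' hx hδ0 (by simp only [hδdef]; simp only [mem_Ioi] at hx; linarith) n)
    hb'

lemma stage2 (σ y₀ y a b : ℝ) (hσ : 0 < σ) (ha : a < min y y₀) (hb : max y y₀ < b) :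
    HasDerivAt (fun t => ∑' n : ℤ, gterm σ y₀ y t b n) (∑' n : ℤ, hterm σ y₀ y b n a) a := by
  set δ := b - min y y₀ with hδdef
  have hδ0 : 0 < δ := by
    have h1 := min_le_max (a := y) (b := y₀)
    simp only [hδdef]
    linarith
  have hc : (0:ℝ) < δ^2/σ^2 := by positivity
  exact hasDerivAt_tsum_on (isOpen_Iio (a := min y y₀))
    (u := fun n : ℤ => 40/σ^2 * ((|(n:ℝ)| + 1)^2 * Real.exp (-(δ^2/σ^2 * (|(n:ℝ)| - 1)^2))))
    ((summable_aux (δ^2/σ^2) hc 2).mul_left _)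
    (fun n x _ => term2_deriv σ y₀ y b n x)
    (fun n x hx => by
      rw [Real.norm_eq_abs]
      exact hterm_bound hσ hx hb hδ0 (by simp only [hδdef]; simp only [mem_Iio] at hx; linarith) n)
    (fun x hx => by
      apply Summable.of_norm_bounded
        (((summable_aux (δ^2/σ^2) hc 1).mul_left (8/σ)))
      intro n
      rw [Real.norm_eq_abs]
      exact gterm_bound hσ hx hb hδ0 (by simp only [hδdef]; simp only [mem_Iio] at hx; linarith) n)
    ha

/-- For `a < min(y, y₀)` and `b > max(y, y₀)`, the mixed second partial derivative of `q`
in `(a, b)` exists (first in `b`, then in `a`) and satisfies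
`−∂²q/(∂a ∂b)(y, a, b | y₀) = p(a, b, y | y₀)`. -/
theorem mixed_partial_q_eq_density (μ σ y₀ y : ℝ) (hσ : 0 < σ)
    (a b : ℝ) (ha : a < min y y₀) (hb : max y y₀ < b) :
    (∀ a' : ℝ, a' < min y y₀ →
        DifferentiableAt ℝ (fun b' => qCHLO μ σ y₀ a' b' y) b) ∧
      HasDerivAt (fun a' => deriv (fun b' => qCHLO μ σ y₀ a' b' y) b)
        (-(pCHLO μ σ y₀ a b y)) a := by
  set C := (1 / (Real.sqrt (2 * Real.pi) * σ)) *
    Real.exp (-(μ ^ 2 - 2 * μ * (y - y₀)) / (2 * σ ^ 2)) with hCdef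
  have hq : ∀ a' : ℝ, (fun b' => qCHLO μ σ y₀ a' b' y) =
      (fun b' => C * ∑' n : ℤ, (Real.exp (-(d1 σ y₀ y a' b' n)) -
        Real.exp (-(d2 σ y₀ y a' b' n)))) := by
    intro a'
    funext b'
    rw [qCHLO, hCdef]
  constructor
  · intro a' ha'
    rw [hq a']
    exact (((stage1 σ y₀ y a' hσ ha' hb).const_mul C)).differentiableAt
  · have h2 := (stage2 σ y₀ y a b hσ ha hb).const_mul C
    have heq : (fun a' => deriv (fun b' => qCHLO μ σ y₀ a' b' y) b) =ᶠ[nhds a]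
        (fun a' => C * ∑' n : ℤ, gterm σ y₀ y a' b n) := by
      filter_upwards [isOpen_Iio.mem_nhds (show a ∈ Iio (min y y₀) from ha)] with a' ha'
      rw [hq a']
      exact ((stage1 σ y₀ y a' hσ ha' hb).const_mul C).deriv
    have hval : C * ∑' n : ℤ, hterm σ y₀ y b n a = -(pCHLO μ σ y₀ a b y) := by
      have hsplit : ∑' n : ℤ, hterm σ y₀ y b n a =
          (σ^2)⁻¹ * ∑' n : ℤ,
            -(4 * (n : ℝ) ^ 2 * (2 * d1 σ y₀ y a b n - 1) * Real.exp (-(d1 σ y₀ y a b n))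
              - 4 * (n : ℝ) * ((n : ℝ) - 1) * (2 * d2 σ y₀ y a b n - 1) *
                Real.exp (-(d2 σ y₀ y a b n))) := by
        simp only [hterm]
        exact tsum_mul_left
      rw [hsplit, tsum_neg, pCHLO, hCdef]
      have key : ∀ W E S t : ℝ, (1/(W*t) * E) * ((t^2)⁻¹ * -S) = -((1/(W*t^3)) * E * S) := by
        intro W E S t
        have h1 : (1:ℝ)/(W*t) = W⁻¹ * t⁻¹ := by rw [one_div, mul_inv]
        have h2 : (1:ℝ)/(W*t^3) = W⁻¹ * (t⁻¹)^3 := by rw [one_div, mul_inv, ← inv_pow]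
        have h3 : (t^2)⁻¹ = (t⁻¹)^2 := by rw [← inv_pow]
        rw [h1, h2, h3]
        ring
      exact key _ _ _ _
    rw [← hval]
    exact h2.congr_of_eventuallyEq heq
end

section
/- Fix μ ∈ ℝ, σ > 0, y₀ ∈ ℝ and y ∈ ℝ, and for a < b define q(y, a, b | y₀) = (1/(√(2π) σ)) exp(−(μ² − 2μ(y − y₀))/(2σ²)) Σ_{n∈ℤ} (exp(−d₁(n)) − exp(−d₂(n))), where d₁(n) = (y − y₀ − 2n(b − a))²/(2σ²) and d₂(n) = (y + y₀ − 2a − 2n(b − a))²/(2σ²). Then as a → −∞ and b → +∞ (jointly, i.e. along the product filter), q(y, a, b | y₀) converges to the Gaussian density with mean y₀ + μ and variance σ² evaluated at y, namely (1/(√(2π) σ)) exp(−(y − y₀ − μ)²/(2σ²)). -/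
open MeasureTheory Filter Set

set_option maxHeartbeats 1000000

/-- If `|x| ≥ k` then `exp(-(x²/c)) ≤ exp(-(1/c))^k`. -/
lemma aux_key {c x : ℝ} (hc : 0 < c) {k : ℕ} (hx : (k : ℝ) ≤ |x|) :
    Real.exp (-(x ^ 2 / c)) ≤ Real.exp (-(1 / c)) ^ k := by
  rw [← Real.exp_nat_mul]
  apply Real.exp_le_exp.mpr
  have hk2 : (k : ℝ) ≤ (k : ℝ) ^ 2 := by
    exact_mod_cast Nat.le_self_pow two_ne_zero k
  have hx2 : (k : ℝ) ^ 2 ≤ x ^ 2 := by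
    rw [← sq_abs x]
    exact pow_le_pow_left₀ (Nat.cast_nonneg k) hx 2
  have h : (k : ℝ) ≤ x ^ 2 := hk2.trans hx2
  rw [mul_neg, mul_one_div]
  exact neg_le_neg (by gcongr)

/-- If `|f| → ∞` then `exp(-(f²/c)) → 0`. -/
lemma aux_exp_sq {α : Type*} {l : Filter α} {f : α → ℝ} {c : ℝ} (hc : 0 < c)
    (hf : Tendsto (fun x => |f x|) l atTop) :
    Tendsto (fun x => Real.exp (-(f x ^ 2 / c))) l (nhds 0) := by
  have h2 : Tendsto (fun x => f x ^ 2) l atTop := by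
    have := (tendsto_pow_atTop (two_ne_zero)).comp hf
    simpa only [Function.comp_def, sq_abs] using this
  have h3 : Tendsto (fun x => -(f x ^ 2 / c)) l atBot :=
    tendsto_neg_atTop_atBot.comp (h2.atTop_div_const hc)
  exact Real.tendsto_exp_atBot.comp h3

/-- As `a → −∞` and `b → +∞` jointly (along the product filter), `q(y, a, b | y₀)`
converges to the Gaussian density with mean `y₀ + μ` and variance `σ²` evaluated at `y`. -/
theorem q_tendsto_gaussian (μ σ y₀ y : ℝ) (hσ : 0 < σ) :
    Tendsto (fun v : ℝ × ℝ => qCHLO μ σ y₀ v.1 v.2 y) (atBot ×ˢ atTop)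
      (nhds ((1 / (Real.sqrt (2 * Real.pi) * σ)) *
        Real.exp (-(y - y₀ - μ) ^ 2 / (2 * σ ^ 2)))) := by
  have hc : (0:ℝ) < 2 * σ ^ 2 := by positivity
  set F := (atBot : Filter ℝ) ×ˢ (atTop : Filter ℝ) with hF
  set r : ℝ := Real.exp (-(1 / (2 * σ ^ 2))) with hr
  have hr0 : 0 < r := Real.exp_pos _
  have hr1 : r < 1 := Real.exp_lt_one_iff.mpr (neg_lt_zero.mpr (by positivity))
  set M : ℝ := |y - y₀| + |y + y₀| + 1 with hM
  have habs_nn1 : (0:ℝ) ≤ |y - y₀| := abs_nonneg _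
  have habs_nn2 : (0:ℝ) ≤ |y + y₀| := abs_nonneg _
  have hM1 : 1 ≤ M := by simp only [hM]; linarith
  have hMy1 : |y - y₀| ≤ M := by simp only [hM]; linarith
  have hMy2 : |y + y₀| ≤ M := by simp only [hM]; linarith
  -- limits of |arguments|
  have hfst : Tendsto (fun v : ℝ × ℝ => v.1) F atBot := tendsto_fst
  have hsnd : Tendsto (fun v : ℝ × ℝ => v.2) F atTop := tendsto_snd
  have hnegfst : Tendsto (fun v : ℝ × ℝ => -v.1) F atTop :=
    tendsto_neg_atBot_atTop.comp hfst
  have hdiff : Tendsto (fun v : ℝ × ℝ => v.2 - v.1) F atTop := by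
    simpa [sub_eq_add_neg] using hsnd.atTop_add_atTop hnegfst
  have hreg : ∀ᶠ v : ℝ × ℝ in F, v.1 ≤ 0 ∧ (0:ℝ) ≤ v.2 :=
    (eventually_le_atBot (0:ℝ)).prod_mk (eventually_ge_atTop (0:ℝ))
  -- termwise limits
  set g : ℤ → ℝ := fun n => if n = 0 then Real.exp (-((y - y₀) ^ 2 / (2 * σ ^ 2))) else 0
    with hg
  have habs1 : ∀ n : ℤ, n ≠ 0 →
      Tendsto (fun v : ℝ × ℝ => |y - y₀ - 2 * (n:ℝ) * (v.2 - v.1)|) F atTop := by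
    intro n hn
    have hNpos : (0:ℝ) < 2 * |(n:ℝ)| := by
      have : (n:ℝ) ≠ 0 := by exact_mod_cast hn
      positivity
    apply tendsto_atTop_mono' F
      (f₁ := fun v : ℝ × ℝ => 2 * |(n:ℝ)| * (v.2 - v.1) - |y - y₀|)
    · filter_upwards with v
      have h1 := abs_sub_abs_le_abs_sub (2 * (n:ℝ) * (v.2 - v.1)) (y - y₀)
      rw [abs_sub_comm (2 * (n:ℝ) * (v.2 - v.1)) (y - y₀)] at h1
      have h2 : 2 * |(n:ℝ)| * (v.2 - v.1) ≤ |2 * (n:ℝ) * (v.2 - v.1)| := by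
        rw [abs_mul, abs_mul, abs_two]
        exact mul_le_mul_of_nonneg_left (le_abs_self _) (by positivity)
      linarith
    · have := (tendsto_const_mul_atTop_of_pos hNpos).mpr hdiff
      simpa [sub_eq_add_neg] using tendsto_atTop_add_const_right _ (-|y - y₀|) this
  have habs2 : ∀ n : ℤ,
      Tendsto (fun v : ℝ × ℝ => |y + y₀ - 2 * v.1 - 2 * (n:ℝ) * (v.2 - v.1)|) F atTop := by
    intro n
    rcases le_or_gt n 0 with hn | hn
    · -- n ≤ 0 : lower bound 2*(-a) - |y+y₀|
      apply tendsto_atTop_mono' F (f₁ := fun v : ℝ × ℝ => 2 * (-v.1) - |y + y₀|)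
      · filter_upwards [hreg] with v hv
        have hba : (0:ℝ) ≤ v.2 - v.1 := by linarith [hv.1, hv.2]
        have hn' : (0:ℝ) ≤ -2 * (n:ℝ) := by
          have : (n:ℝ) ≤ 0 := by exact_mod_cast hn
          linarith
        have h1 : |(-2) * v.1 - 2 * (n:ℝ) * (v.2 - v.1)| - |-(y + y₀)| ≤
            |y + y₀ - 2 * v.1 - 2 * (n:ℝ) * (v.2 - v.1)| := by
          have := abs_sub_abs_le_abs_sub ((-2) * v.1 - 2 * (n:ℝ) * (v.2 - v.1)) (-(y + y₀))
          have heq : (-2) * v.1 - 2 * (n:ℝ) * (v.2 - v.1) - -(y + y₀)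
              = y + y₀ - 2 * v.1 - 2 * (n:ℝ) * (v.2 - v.1) := by ring
          rwa [heq] at this
        have h2 : 2 * (-v.1) ≤ (-2) * v.1 - 2 * (n:ℝ) * (v.2 - v.1) := by
          nlinarith
        have h3 : (-2) * v.1 - 2 * (n:ℝ) * (v.2 - v.1) ≤
            |(-2) * v.1 - 2 * (n:ℝ) * (v.2 - v.1)| := le_abs_self _
        rw [abs_neg] at h1
        linarith
      · have := (tendsto_const_mul_atTop_of_pos (by norm_num : (0:ℝ) < 2)).mpr hnegfst
        simpa [sub_eq_add_neg] using tendsto_atTop_add_const_right _ (-|y + y₀|) this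
    · -- n ≥ 1 : lower bound 2n*b - |y+y₀|
      have hn1 : (1:ℝ) ≤ (n:ℝ) := by exact_mod_cast hn
      apply tendsto_atTop_mono' F (f₁ := fun v : ℝ × ℝ => 2 * (n:ℝ) * v.2 - |y + y₀|)
      · filter_upwards [hreg] with v hv
        have key : 2 * (n:ℝ) * v.2 - |y + y₀| ≤
            -(y + y₀ - 2 * v.1 - 2 * (n:ℝ) * (v.2 - v.1)) := by
          have h1 : -|y + y₀| ≤ -(y + y₀) := neg_le_neg (le_abs_self _)
          have h2 : (0:ℝ) ≤ (2 * (n:ℝ) - 2) * (-v.1) := by nlinarith [hv.1]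
          nlinarith
        calc 2 * (n:ℝ) * v.2 - |y + y₀|
            ≤ -(y + y₀ - 2 * v.1 - 2 * (n:ℝ) * (v.2 - v.1)) := key
          _ ≤ |y + y₀ - 2 * v.1 - 2 * (n:ℝ) * (v.2 - v.1)| := neg_le_abs _
      · have := (tendsto_const_mul_atTop_of_pos (by linarith : (0:ℝ) < 2 * (n:ℝ))).mpr hsnd
        simpa [sub_eq_add_neg] using tendsto_atTop_add_const_right _ (-|y + y₀|) this
  have hab : ∀ n : ℤ, Tendsto
      (fun v : ℝ × ℝ => Real.exp (-(d1 σ y₀ y v.1 v.2 n)) - Real.exp (-(d2 σ y₀ y v.1 v.2 n)))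
      F (nhds (g n)) := by
    intro n
    have h2 : Tendsto (fun v : ℝ × ℝ => Real.exp (-(d2 σ y₀ y v.1 v.2 n))) F (nhds 0) := by
      simp only [d2]
      exact aux_exp_sq hc (habs2 n)
    by_cases hn : n = 0
    · subst hn
      have h := (tendsto_const_nhds :
        Tendsto (fun _ : ℝ × ℝ => Real.exp (-((y - y₀) ^ 2 / (2 * σ ^ 2)))) F _).sub h2
      rw [sub_zero] at h
      have hd1 : ∀ a b : ℝ, d1 σ y₀ y a b 0 = (y - y₀) ^ 2 / (2 * σ ^ 2) := by
        intro a b; simp [d1]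
      simp only [hg, if_pos rfl, hd1]
      exact h
    · have h1 : Tendsto (fun v : ℝ × ℝ => Real.exp (-(d1 σ y₀ y v.1 v.2 n))) F (nhds 0) := by
        simp only [d1]
        exact aux_exp_sq hc (habs1 n hn)
      have h := h1.sub h2
      rw [sub_zero] at h
      simpa [hg, hn] using h
  -- dominating bound
  have h_sum : Summable (fun n : ℤ => 2 * r ^ n.natAbs) := by
    apply Summable.mul_left
    apply Summable.of_nat_of_neg
    · simpa using summable_geometric_of_lt_one hr0.le hr1
    · simpa using summable_geometric_of_lt_one hr0.le hr1
  have h_bound : ∀ᶠ v : ℝ × ℝ in F, ∀ n : ℤ,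
      ‖Real.exp (-(d1 σ y₀ y v.1 v.2 n)) - Real.exp (-(d2 σ y₀ y v.1 v.2 n))‖
        ≤ 2 * r ^ n.natAbs := by
    have hev : ∀ᶠ v : ℝ × ℝ in F, v.1 ≤ -M ∧ M ≤ v.2 :=
      (eventually_le_atBot (-M)).prod_mk (eventually_ge_atTop M)
    filter_upwards [hev] with v hv n
    obtain ⟨ha, hb⟩ := hv
    set N : ℝ := (n.natAbs : ℝ) with hN
    have hN0 : (0:ℝ) ≤ N := by rw [hN]; positivity
    have hNabs : |(n:ℝ)| = N := by
      simp [hN, Nat.cast_natAbs]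
    have hba : 2 * M ≤ v.2 - v.1 := by linarith
    have hba0 : (0:ℝ) ≤ v.2 - v.1 := by linarith
    -- |arg1| ≥ N
    have harg1 : N ≤ |y - y₀ - 2 * (n:ℝ) * (v.2 - v.1)| := by
      rcases eq_or_ne n 0 with h0 | h0
      · subst h0
        simp only [hN, Int.natAbs_zero, Nat.cast_zero]
        exact abs_nonneg _
      · have hN1 : (1:ℝ) ≤ N := by
          rw [hN]
          exact_mod_cast Nat.one_le_iff_ne_zero.mpr (Int.natAbs_ne_zero.mpr h0)
        have h1 := abs_sub_abs_le_abs_sub (2 * (n:ℝ) * (v.2 - v.1)) (y - y₀)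
        rw [abs_sub_comm (2 * (n:ℝ) * (v.2 - v.1)) (y - y₀)] at h1
        have h2 : |2 * (n:ℝ) * (v.2 - v.1)| = 2 * N * (v.2 - v.1) := by
          rw [abs_mul, abs_mul, abs_two, hNabs, abs_of_nonneg hba0]
        rw [h2] at h1
        -- 2N(v2-v1) ≥ 4NM and 4NM - M ≥ N
        have h3 : 2 * N * (2 * M) ≤ 2 * N * (v.2 - v.1) :=
          mul_le_mul_of_nonneg_left hba (by linarith)
        have h4 : (0:ℝ) ≤ (M - 1) * (4 * N - 1) := by nlinarith
        nlinarith
    -- |arg2| ≥ N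
    have harg2 : N ≤ |y + y₀ - 2 * v.1 - 2 * (n:ℝ) * (v.2 - v.1)| := by
      rcases le_or_gt n 0 with hn | hn
      · have hneg : (n:ℝ) ≤ 0 := by exact_mod_cast hn
        have hNn : (n:ℝ) = -N := by
          rw [← hNabs, abs_of_nonpos hneg]; ring
        have h3 : y + y₀ - 2 * v.1 - 2 * (n:ℝ) * (v.2 - v.1) ≤
            |y + y₀ - 2 * v.1 - 2 * (n:ℝ) * (v.2 - v.1)| := le_abs_self _
        have h4 : -|y + y₀| ≤ y + y₀ := neg_abs_le _
        rw [hNn] at h3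
        have h5 : 2 * N * (2 * M) ≤ 2 * N * (v.2 - v.1) :=
          mul_le_mul_of_nonneg_left hba (by linarith)
        have h6 : (0:ℝ) ≤ N * (M - 1) := mul_nonneg hN0 (by linarith)
        rw [hNn]
        nlinarith
      · have hn1 : (1:ℝ) ≤ (n:ℝ) := by exact_mod_cast hn
        have hNn : (n:ℝ) = N := by
          rw [← hNabs, abs_of_pos (by linarith : (0:ℝ) < (n:ℝ))]
        have hN1 : (1:ℝ) ≤ N := hNn ▸ hn1
        have h3 : -(y + y₀ - 2 * v.1 - 2 * (n:ℝ) * (v.2 - v.1)) ≤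
            |y + y₀ - 2 * v.1 - 2 * (n:ℝ) * (v.2 - v.1)| := neg_le_abs _
        have h4 : y + y₀ ≤ |y + y₀| := le_abs_self _
        rw [hNn] at h3
        have h5 : (2 * N - 2) * M ≤ (2 * N - 2) * (-v.1) :=
          mul_le_mul_of_nonneg_left (by linarith) (by linarith)
        have h6 : 2 * N * M ≤ 2 * N * v.2 :=
          mul_le_mul_of_nonneg_left hb (by linarith)
        have h7 : (0:ℝ) ≤ (M - 1) * (4 * N - 3) := by nlinarith
        rw [hNn]
        nlinarith
    rw [hN] at harg1 harg2
    have hb1 : Real.exp (-(d1 σ y₀ y v.1 v.2 n)) ≤ r ^ n.natAbs := by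
      simp only [d1]; exact aux_key hc harg1
    have hb2 : Real.exp (-(d2 σ y₀ y v.1 v.2 n)) ≤ r ^ n.natAbs := by
      simp only [d2]; exact aux_key hc harg2
    have hp1 : 0 < Real.exp (-(d1 σ y₀ y v.1 v.2 n)) := Real.exp_pos _
    have hp2 : 0 < Real.exp (-(d2 σ y₀ y v.1 v.2 n)) := Real.exp_pos _
    rw [Real.norm_eq_abs, abs_sub_le_iff]
    constructor <;> linarith
  -- dominated convergence for the series
  have hmain : Tendsto
      (fun v : ℝ × ℝ => ∑' n : ℤ,
        (Real.exp (-(d1 σ y₀ y v.1 v.2 n)) - Real.exp (-(d2 σ y₀ y v.1 v.2 n))))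
      F (nhds (Real.exp (-((y - y₀) ^ 2 / (2 * σ ^ 2))))) := by
    have h := tendsto_tsum_of_dominated_convergence h_sum hab h_bound
    have htsum : ∑' n : ℤ, g n = Real.exp (-((y - y₀) ^ 2 / (2 * σ ^ 2))) := by
      simp only [hg]
      exact tsum_ite_eq (0:ℤ) _
    rwa [htsum] at h
  -- combine with constant prefactor
  have hconst := hmain.const_mul
    ((1 / (Real.sqrt (2 * Real.pi) * σ)) *
      Real.exp (-(μ ^ 2 - 2 * μ * (y - y₀)) / (2 * σ ^ 2)))
  have hfinal : (1 / (Real.sqrt (2 * Real.pi) * σ)) *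
      Real.exp (-(μ ^ 2 - 2 * μ * (y - y₀)) / (2 * σ ^ 2)) *
      Real.exp (-((y - y₀) ^ 2 / (2 * σ ^ 2)))
      = (1 / (Real.sqrt (2 * Real.pi) * σ)) * Real.exp (-(y - y₀ - μ) ^ 2 / (2 * σ ^ 2)) := by
    rw [mul_assoc, ← Real.exp_add]
    congr 2
    field_simp
    ring
  rw [hfinal] at hconst
  simpa [qCHLO, mul_assoc] using hconst
end
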